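/- Raising morphism property of Υ̊ (Lemma 'lem:graftMorphism', second identity): For every family F = (F^𝔩_𝔱)_{𝔱∈𝔏₊,𝔩∈𝔇} with every F^𝔩_𝔱 ∈ 𝒫, every l ∈ {0,…,d}, and every σ ∈ 𝔅, the map Υ̊^F vanishes on all but finitely many of the trees appearing in the formal series ↑_l σ, and the resulting finite sum satisfies Υ̊^F[↑_l σ] = ∂_l Υ̊^F[σ], where ∂_l acts componentwise on 𝒫^{𝔏₊}. -/

import Mathlib

/-
Common framework: multi-indices, the algebra of smooth functions on ℝ^𝒪,
and the spaces of decorated trees 𝒱 and 𝔅 of [Bruned–Chandra–Chevyrev–Hairer,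
"Renormalising SPDEs in regularity structures"], presented abstractly together
with the defining recursions of the various operators on them.
-/

open scoped BigOperators Classical

namespace SPDERenorm

/-! ### Multi-indices in `ℕ^{d+1}` -/

abbrev MIdx (d : ℕ) := Fin (d+1) → ℕ

/-- `k! = ∏ᵢ k[i]!`. -/
def mfact {d : ℕ} (k : MIdx d) : ℕ := ∏ i, Nat.factorial (k i)

/-- `C(k,ℓ) = ∏ᵢ binom(k[i], ℓ[i])`. -/
def mchoose {d : ℕ} (k l : MIdx d) : ℕ := ∏ i, Nat.choose (k i) (l i)

/-- `|k| = Σᵢ k[i]`. -/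
def msize {d : ℕ} (k : MIdx d) : ℕ := ∑ i, k i

/-- The unit multi-index `e_i`. -/
def munit {d : ℕ} (i : Fin (d+1)) : MIdx d := Pi.single i 1

/-- Sum of `f ℓ` over all multi-indices `ℓ ≤ m` (componentwise). -/
noncomputable def msum {d : ℕ} {A : Type*} [AddCommMonoid A] (m : MIdx d) (f : MIdx d → A) : A :=
  ∑ e : (∀ i : Fin (d+1), Fin (m i + 1)), f fun i => (e i : ℕ)

/-- The scaled size `|k|_𝔰 = Σᵢ k[i]·𝔰ᵢ`. -/
noncomputable def wdeg {d : ℕ} (s : Fin (d+1) → ℝ) (k : MIdx d) : ℝ := ∑ i, (k i : ℝ) * s i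

/-- The index set `𝒪 = 𝔏₊ × ℕ^{d+1}`. -/
abbrev Odx (Lp : Type) (d : ℕ) := Lp × MIdx d

/-! ### Functions on `ℝ^𝒪` and differential operators -/

/-- Real-valued functions on `ℝ^𝒪`. -/
abbrev FnO (Lp : Type) (d : ℕ) := (Odx Lp d → ℝ) → ℝ

/-- The coordinate function `𝒳_o`. -/
def Xc {Lp : Type} {d : ℕ} (o : Odx Lp d) : FnO Lp d := fun x => x o

/-- The partial derivative `D_o` in the `o`-th coordinate. -/
noncomputable def Dpart {Lp : Type} {d : ℕ} [DecidableEq Lp] (o : Odx Lp d) (F : FnO Lp d) :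
    FnO Lp d :=
  fun x => deriv (fun t : ℝ => F (Function.update x o t)) (x o)

/-- Iterated partial derivatives `D_{o₁} ∘ ⋯ ∘ D_{oₙ}` over a list. -/
noncomputable def Dlist {Lp : Type} {d : ℕ} [DecidableEq Lp] (L : List (Odx Lp d))
    (F : FnO Lp d) : FnO Lp d :=
  L.foldr Dpart F

/-- The derivation `∂_i F = Σ_{(𝔱,p)} 𝒳_{(𝔱,p+e_i)} · D_{(𝔱,p)} F`. -/
noncomputable def pderivO {Lp : Type} {d : ℕ} [DecidableEq Lp] (i : Fin (d+1)) (F : FnO Lp d) :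
    FnO Lp d :=
  fun x => ∑ᶠ o : Odx Lp d, Xc (o.1, o.2 + munit i) x * Dpart o F x

/-- `∂^k = ∏ᵢ ∂ᵢ^{k[i]}`. -/
noncomputable def mpderiv {Lp : Type} {d : ℕ} [DecidableEq Lp] (k : MIdx d) (F : FnO Lp d) :
    FnO Lp d :=
  (List.finRange (d+1)).foldr (fun i G => (pderivO i)^[k i] G) F

/-- `D^α` for a finitely supported `α ∈ ℕ^𝒪`. -/
noncomputable def Dexp {Lp : Type} {d : ℕ} [DecidableEq Lp] (α : Odx Lp d →₀ ℕ)
    (F : FnO Lp d) : FnO Lp d :=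
  Dlist (Finsupp.toMultiset α).toList F

/-- `α! = ∏_o α[o]!`. -/
def afact {Lp : Type} {d : ℕ} (α : Odx Lp d →₀ ℕ) : ℕ := α.prod fun _ n => Nat.factorial n

/-- The monomial `𝒳^α`. -/
noncomputable def Xpow {Lp : Type} {d : ℕ} (α : Odx Lp d →₀ ℕ) : FnO Lp d :=
  fun x => α.prod fun o n => x o ^ n

/-- `F` depends only on the coordinates in `s`. -/
def DependsOnlyOn {Lp : Type} {d : ℕ} (F : FnO Lp d) (s : Set (Odx Lp d)) : Prop :=
  ∀ x y, (∀ o ∈ s, x o = y o) → F x = F y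

/-- Membership in `𝒞_𝒪`: smooth functions depending on finitely many coordinates. -/
def IsSmoothCO {Lp : Type} {d : ℕ} (F : FnO Lp d) : Prop :=
  ∃ (s : Finset (Odx Lp d)) (g : (↥s → ℝ) → ℝ),
    ContDiff ℝ (⊤ : ℕ∞) g ∧ ∀ x, F x = g fun o => x o.1

/-- Membership in `𝒫 ⊆ 𝒞_𝒪` (relative to the partition `𝒪 = 𝒪₊ ⊔ 𝒪₋`). -/
def IsP {Lp : Type} {d : ℕ} (Om Op : Set (Odx Lp d)) (F : FnO Lp d) : Prop :=
  ∃ (m : ℕ) (α : Fin m → (Odx Lp d →₀ ℕ)) (G : Fin m → FnO Lp d),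
    Function.Injective α ∧
    (∀ j, ∀ o ∈ (α j).support, o ∈ Om) ∧
    (∀ j, IsSmoothCO (G j)) ∧
    (∀ j, G j ≠ 0) ∧
    (∀ j, DependsOnlyOn (G j) Op) ∧
    F = fun x => ∑ j, G j x * Xpow (α j) x

/-- `F` is a real polynomial in finitely many of the coordinate functions. -/
def IsPolyFn {Lp : Type} {d : ℕ} (F : FnO Lp d) : Prop :=
  ∃ (s : Finset (Odx Lp d)) (P : MvPolynomial (↥s) ℝ),
    ∀ x, F x = MvPolynomial.eval (fun o => x o.1) P

/-! ### The trees of `𝒱` -/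

/-- The set `𝒱` of decorated rooted trees, presented abstractly: a tree is uniquely
built from a root decoration `(𝔩,k) ∈ 𝔇 × ℕ^{d+1}` and a multiset of decorated branches,
and every tree arises this way (induction). -/
structure TreeV (Lp Dr : Type) (d : ℕ) where
  V : Type
  node : Dr → MIdx d → Multiset (Odx Lp d × V) → V
  node_bij : Function.Bijective
    (fun x : Dr × MIdx d × Multiset (Odx Lp d × V) => node x.1 x.2.1 x.2.2)
  ind : ∀ P : V → Prop,
    (∀ l k (M : Multiset (Odx Lp d × V)), (∀ x ∈ M, P x.2) → P (node l k M)) → ∀ τ, P τ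

namespace TreeV

variable {Lp Dr : Type} {d : ℕ} (S : TreeV Lp Dr d)

/-- Rebuild a tree after replacing the `j`-th branch by a linear combination of trees. -/
noncomputable def replace (l : Dr) (k : MIdx d) (L : List (Odx Lp d × S.V))
    (j : Fin L.length) (w : S.V →₀ ℝ) : S.V →₀ ℝ :=
  w.sum fun τ' c => Finsupp.single (S.node l k (↑(L.set j ((L.get j).1, τ')))) c

/-- Decomposition of a tree into its root decoration and branches. -/
noncomputable def dec : S.V ≃ Dr × MIdx d × Multiset (Odx Lp d × S.V) :=
  (Equiv.ofBijective _ S.node_bij).symm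

/-- The polynomial decoration at the root. -/
noncomputable def polyOf (τ : S.V) : MIdx d := (S.dec τ).2.1

/-- The multiset of branches at the root. -/
noncomputable def branchesOf (τ : S.V) : Multiset (Odx Lp d × S.V) := (S.dec τ).2.2

/-- The commutative tree product merging the roots of `g 0, …, g (n-1)`
(adding the polynomial decorations), the merged root receiving the driver label `l`. -/
noncomputable def merge (l : Dr) {n : ℕ} (g : Fin n → S.V) : S.V :=
  S.node l (∑ r, S.polyOf (g r)) (∑ r, S.branchesOf (g r))

/-- Defining recursion of the grafting operators `⋖̂_o : 𝕍 ⊗ 𝕍 → 𝕍`. -/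
def GraftSpec [DecidableEq Lp] (graft : Odx Lp d → S.V → S.V → (S.V →₀ ℝ)) : Prop :=
  ∀ (t : Lp) (p : MIdx d) (τ : S.V) (l : Dr) (k : MIdx d) (L : List (Odx Lp d × S.V)),
    graft (t, p) τ (S.node l k ↑L) =
      msum (k ⊓ p) (fun ℓ =>
        (mchoose k ℓ : ℝ) •
          Finsupp.single (S.node l (k - ℓ) (((t, p - ℓ), τ) ::ₘ (↑L : Multiset _))) 1)
      + ∑ j : Fin L.length, S.replace l k L j (graft (t, p) τ (L.get j).2)

/-- Defining recursion of the symmetry factor `S(τ)`. -/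
def SymSpec [DecidableEq Lp] [DecidableEq S.V] (sym : S.V → ℕ) : Prop :=
  ∀ (l : Dr) (k : MIdx d) (M : Multiset (Odx Lp d × S.V)),
    sym (S.node l k M) =
      mfact k * ∏ x ∈ M.toFinset, Nat.factorial (M.count x) * sym x.2 ^ M.count x

/-- Defining recursion of the inner product on `𝕍`. -/
def IPSpec (ip : S.V → S.V → ℝ) : Prop :=
  ∀ (l l' : Dr) (k k' : MIdx d) (L L' : List (Odx Lp d × S.V)),
    ip (S.node l k ↑L) (S.node l' k' ↑L') =
      (if l = l' ∧ k = k' then (mfact k : ℝ) else 0) *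
        ∑ s : Fin L.length ≃ Fin L'.length,
          ∏ j : Fin L.length,
            (if (L.get j).1 = (L'.get (s j)).1 then ip (L.get j).2 (L'.get (s j)).2 else 0)

/-- Defining recursion of `Υ^F`. -/
def UpsSpec [DecidableEq Lp] (F : Lp → Dr → FnO Lp d) (Ups : Lp → S.V → FnO Lp d) : Prop :=
  ∀ (t : Lp) (l : Dr) (k : MIdx d) (L : List (Odx Lp d × S.V)),
    Ups t (S.node l k ↑L) = fun x =>
      (∏ j : Fin L.length, Ups (L.get j).1.1 (L.get j).2 x) *
        mpderiv k (Dlist (L.map Prod.fst) (F t l)) x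

/-- Defining recursion of the raising operator `↑̂_i` on `𝕍`. -/
def RaiseSpec (raise : Fin (d+1) → S.V → (S.V →₀ ℝ)) : Prop :=
  ∀ (i : Fin (d+1)) (l : Dr) (k : MIdx d) (L : List (Odx Lp d × S.V)),
    raise i (S.node l k ↑L) =
      Finsupp.single (S.node l (k + munit i) ↑L) 1
      + ∑ j : Fin L.length, S.replace l k L j (raise i (L.get j).2)

/-- Defining recursion of the cutting operator `⋖̂*_o : 𝕍 → 𝕍 ⊗ 𝕍` (elements of
`𝕍 ⊗ 𝕍` represented as finitely supported functions on pairs of trees, a pair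
`(branch, trunk)` recording a cut). -/
def CutSpec [DecidableEq Lp] (cut : Odx Lp d → S.V → (S.V × S.V →₀ ℝ)) : Prop :=
  ∀ (t : Lp) (p : MIdx d) (l : Dr) (k : MIdx d) (L : List (Odx Lp d × S.V)),
    cut (t, p) (S.node l k ↑L) =
      (∑ j : Fin L.length,
        if (L.get j).1.1 = t ∧ (L.get j).1.2 ≤ p then
          ((mfact (p - (L.get j).1.2) : ℝ))⁻¹ •
            Finsupp.single ((L.get j).2,
              S.node l (k + (p - (L.get j).1.2)) ↑(L.eraseIdx j)) 1
        else 0)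
      + ∑ j : Fin L.length,
          (cut (t, p) (L.get j).2).sum fun ab c =>
            Finsupp.single (ab.1, S.node l k ↑(L.set j ((L.get j).1, ab.2))) c

/-- Defining recursion of the lowering operator `↑̂*_i` on `𝕍`. -/
def LowSpec (low : Fin (d+1) → S.V → (S.V →₀ ℝ)) : Prop :=
  ∀ (i : Fin (d+1)) (l : Dr) (k : MIdx d) (L : List (Odx Lp d × S.V)),
    low i (S.node l k ↑L) =
      (k i : ℝ) • Finsupp.single (S.node l (k - munit i) ↑L) 1
      + ∑ j : Fin L.length, S.replace l k L j (low i (L.get j).2)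

/-- Defining recursion of the predicate "`τ` is `𝔱`-non-vanishing for `F`". -/
def NVSpec [DecidableEq Lp] (F : Lp → Dr → FnO Lp d) (NV : Lp → S.V → Prop) : Prop :=
  ∀ (t : Lp) (l : Dr) (k : MIdx d) (L : List (Odx Lp d × S.V)),
    NV t (S.node l k ↑L) ↔
      (mpderiv k (Dlist (L.map Prod.fst) (F t l)) ≠ 0 ∧
        ∀ j : Fin L.length, NV (L.get j).1.1 (L.get j).2)

/-- The coefficient series of `U_o − u_o·𝟏`, for the jet `U` with Taylor coefficients `u`
and planted-tree coefficients `c_𝔱(τ)/S(τ)`. -/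
noncomputable def uSeries (z : Dr) (u : Odx Lp d → ℝ) (c : Lp → S.V → ℝ) (sym : S.V → ℕ)
    (o : Odx Lp d) (σ : S.V) : ℝ :=
  (∑ᶠ q : MIdx d, if q ≠ 0 ∧ σ = S.node z q 0 then u (o.1, o.2 + q) / (mfact q : ℝ) else 0) +
  ∑ᶠ τ : S.V, if σ = S.node z 0 {(o, τ)} then c o.1 τ / (sym τ : ℝ) else 0

/-- The coefficient series of the product `(U − u·𝟏)^α · Ξ_l`, expanded by multilinearity
using the commutative tree product merging the roots. -/
noncomputable def powCoef (coef : Odx Lp d → S.V → ℝ) (l : Dr) (α : Odx Lp d →₀ ℕ)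
    (σ : S.V) : ℝ :=
  ∑ᶠ g : Fin (Finsupp.toMultiset α).toList.length → S.V,
    (∏ r, coef ((Finsupp.toMultiset α).toList.get r) (g r)) *
      (if σ = S.merge l g then 1 else 0)

/-- The coefficient series of `Σ_{𝔩∈𝔇} F^𝔩_𝔱(U)·Ξ_𝔩`, where
`F^𝔩_𝔱(U)·Ξ_𝔩 = Σ_α (D^α F^𝔩_𝔱(u)/α!)·(U − u·𝟏)^α·Ξ_𝔩`. -/
noncomputable def lhsCoef [DecidableEq Lp] (F : Lp → Dr → FnO Lp d) (u : Odx Lp d → ℝ)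
    (coef : Odx Lp d → S.V → ℝ) (t : Lp) (σ : S.V) : ℝ :=
  ∑ᶠ l : Dr, ∑ᶠ α : Odx Lp d →₀ ℕ,
    Dexp α (F t l) u / (afact α : ℝ) * S.powCoef coef l α σ

/-- Defining recursion of the 𝔰-degree `|·|_𝔰` of decorated trees (with driver labels in
`𝔏₋ ⊔ {𝟎}`, encoded as `Option Lm` with `none = 𝟎`). -/
def DegSpec {Lm : Type} (S : TreeV Lp (Option Lm) d) (s : Fin (d+1) → ℝ)
    (degL : Lp → ℝ) (degLm : Lm → ℝ) (deg : S.V → ℝ) : Prop :=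
  ∀ (l : Option Lm) (k : MIdx d) (M : Multiset (Odx Lp d × S.V)),
    deg (S.node l k M) =
      l.elim 0 degLm + wdeg s k +
        ((M.map fun x => (degL x.1.1 - wdeg s x.1.2) + deg x.2).sum)

end TreeV

/-! ### The trees of `𝔅` -/

/-- Polynomial node-decoration factors `𝓘_{(𝔱,p)}[X^k]` with `p ≤ k` and `p ≠ k`;
an element is a pair `((𝔱,p), k)` subject to these constraints. -/
abbrev PolyDec (Lp : Type) (d : ℕ) :=
  {x : Odx Lp d × MIdx d // x.1.2 ≤ x.2 ∧ x.1.2 ≠ x.2}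

/-- Raise the polynomial exponent of a `PolyDec` by `e_i`. -/
def PolyDec.bump {Lp : Type} {d : ℕ} (pd : PolyDec Lp d) (i : Fin (d+1)) : PolyDec Lp d :=
  ⟨(pd.1.1, pd.1.2 + munit i), by
    constructor
    · exact fun j => le_trans (pd.2.1 j) (Nat.le_add_right _ _)
    · intro h
      have hi : pd.1.1.2 i ≤ pd.1.2 i := pd.2.1 i
      have h' : pd.1.1.2 i = pd.1.2 i + munit i i := congrFun h i
      simp only [munit, Pi.single_eq_same] at h'
      omega⟩

/-- The fresh polynomial decoration `𝓘_{(𝔱,p)}[X^{p+e_i}]`. -/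
def freshPD {Lp : Type} {d : ℕ} (o : Odx Lp d) (i : Fin (d+1)) : PolyDec Lp d :=
  ⟨(o, o.2 + munit i), by
    constructor
    · exact fun j => Nat.le_add_right _ _
    · intro h
      have h' : o.2 i = o.2 i + munit i i := congrFun h i
      simp only [munit, Pi.single_eq_same] at h'
      omega⟩

/-- Lower the polynomial exponent of a `PolyDec` by `e_i`. -/
def PolyDec.lower {Lp : Type} {d : ℕ} (pd : PolyDec Lp d) (i : Fin (d+1))
    (h : pd.1.1.2 + munit i ≤ pd.1.2) (hne : ¬ pd.1.2 - munit i = pd.1.1.2) : PolyDec Lp d :=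
  ⟨(pd.1.1, pd.1.2 - munit i), by
    constructor
    · intro j
      have hj := h j
      simp only [Pi.add_apply, Pi.sub_apply] at hj ⊢
      omega
    · exact fun hh => hne hh.symm⟩

/-- The set `𝔅` of decorated rooted trees with polynomial node decorations, presented
abstractly. -/
structure TreeB (Lp Dr : Type) (d : ℕ) where
  B : Type
  node : Dr → Multiset (PolyDec Lp d) → Multiset (Odx Lp d × B) → B
  node_bij : Function.Bijective
    (fun x : Dr × Multiset (PolyDec Lp d) × Multiset (Odx Lp d × B) => node x.1 x.2.1 x.2.2)
  ind : ∀ P : B → Prop,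
    (∀ l N (M : Multiset (Odx Lp d × B)), (∀ x ∈ M, P x.2) → P (node l N M)) → ∀ σ, P σ

namespace TreeB

variable {Lp Dr : Type} {d : ℕ} (S : TreeB Lp Dr d)

/-- Rebuild a tree after replacing the `j`-th branch by a linear combination of trees. -/
noncomputable def replace (l : Dr) (N : List (PolyDec Lp d)) (L : List (Odx Lp d × S.B))
    (j : Fin L.length) (w : S.B →₀ ℝ) : S.B →₀ ℝ :=
  w.sum fun σ' c => Finsupp.single (S.node l ↑N (↑(L.set j ((L.get j).1, σ')))) c

/-- Defining recursion of `Υ̊^F`. -/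
def UpsSpec [DecidableEq Lp] (F : Lp → Dr → FnO Lp d) (Ups : Lp → S.B → FnO Lp d) : Prop :=
  ∀ (t : Lp) (l : Dr) (N : List (PolyDec Lp d)) (L : List (Odx Lp d × S.B)),
    Ups t (S.node l ↑N ↑L) = fun x =>
      (∏ i : Fin N.length, x ((N.get i).1.1.1, (N.get i).1.2)) *
      (∏ j : Fin L.length, Ups (L.get j).1.1 (L.get j).2 x) *
      Dlist (N.map (fun pd => pd.1.1) ++ L.map Prod.fst) (F t l) x

/-- Defining recursion of the grafting operators `⋖_o` on `𝔅`. -/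
def GraftSpec (graft : Odx Lp d → S.B → S.B → (S.B →₀ ℝ)) : Prop :=
  ∀ (o : Odx Lp d) (σ' : S.B) (l : Dr) (N : List (PolyDec Lp d)) (L : List (Odx Lp d × S.B)),
    graft o σ' (S.node l ↑N ↑L) =
      Finsupp.single (S.node l ↑N ((o, σ') ::ₘ (↑L : Multiset _))) 1
      + (∑ j : Fin L.length, S.replace l N L j (graft o σ' (L.get j).2))
      + ∑ i : Fin N.length,
          (if o = ((N.get i).1.1.1, (N.get i).1.2) then
            Finsupp.single
              (S.node l ↑(N.eraseIdx i) (((N.get i).1.1, σ') ::ₘ (↑L : Multiset _))) 1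
          else 0)

/-- Defining recursion of the inner product on `𝔹`. -/
def IPSpec (ip : S.B → S.B → ℝ) : Prop :=
  ∀ (l l' : Dr) (N N' : List (PolyDec Lp d)) (L L' : List (Odx Lp d × S.B)),
    ip (S.node l ↑N ↑L) (S.node l' ↑N' ↑L') =
      (if l = l' then 1 else 0) *
      (∑ s : Fin N.length ≃ Fin N'.length,
        ∏ i : Fin N.length,
          (if (N.get i).1 = (N'.get (s i)).1 then
            (mfact ((N.get i).1.2 - (N.get i).1.1.2) : ℝ)
          else 0)) *
      ∑ s : Fin L.length ≃ Fin L'.length,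
        ∏ j : Fin L.length,
          (if (L.get j).1 = (L'.get (s j)).1 then ip (L.get j).2 (L'.get (s j)).2 else 0)

/-- Defining recursion of the raising operator `↑_i` on `𝔅`, producing a formal series
(represented by its coefficient function `𝔅 → ℝ`). -/
def RaiseSpec (raise : Fin (d+1) → S.B → (S.B → ℝ)) : Prop :=
  ∀ (i : Fin (d+1)) (l : Dr) (N : List (PolyDec Lp d)) (L : List (Odx Lp d × S.B)),
    raise i (S.node l ↑N ↑L) = fun σ'' =>
      (∑ ib : Fin N.length,
        (if σ'' = S.node l ↑(N.set ib ((N.get ib).bump i)) ↑L then 1 else 0))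
      + (if ∃ o : Odx Lp d, σ'' = S.node l (freshPD o i ::ₘ (↑N : Multiset _)) ↑L then 1 else 0)
      + ∑ j : Fin L.length,
          ∑ᶠ σ' : S.B,
            raise i (L.get j).2 σ' *
              (if σ'' = S.node l ↑N ↑(L.set j ((L.get j).1, σ')) then 1 else 0)

/-- Defining recursion of the lowering operator `↑*_i` on `𝔅`. -/
def LowSpec (low : Fin (d+1) → S.B → (S.B →₀ ℝ)) : Prop :=
  ∀ (i : Fin (d+1)) (l : Dr) (N : List (PolyDec Lp d)) (L : List (Odx Lp d × S.B)),
    low i (S.node l ↑N ↑L) =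
      (∑ ib : Fin N.length,
        (if h : (N.get ib).1.1.2 + munit i ≤ (N.get ib).1.2 then
          (((N.get ib).1.2 i - (N.get ib).1.1.2 i : ℕ) : ℝ) •
            (if he : (N.get ib).1.2 - munit i = (N.get ib).1.1.2 then
              Finsupp.single (S.node l ↑(N.eraseIdx ib) ↑L) 1
            else
              Finsupp.single (S.node l ↑(N.set ib ((N.get ib).lower i h he)) ↑L) 1)
        else 0))
      + ∑ j : Fin L.length, S.replace l N L j (low i (L.get j).2)

/-- Defining recursion of the cutting operator `⋖*_o : 𝔹 → 𝔹 ⊗ 𝔹` (elements of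
`𝔹 ⊗ 𝔹` represented as finitely supported functions on pairs of trees, a pair
`(branch, trunk)` recording a cut). -/
def CutSpec (cut : Odx Lp d → S.B → (S.B × S.B →₀ ℝ)) : Prop :=
  ∀ (t : Lp) (p : MIdx d) (l : Dr) (N : List (PolyDec Lp d)) (L : List (Odx Lp d × S.B)),
    cut (t, p) (S.node l ↑N ↑L) =
      (∑ j : Fin L.length,
        (if hc : (L.get j).1.1 = t ∧ (L.get j).1.2 ≤ p then
          ((mfact (p - (L.get j).1.2) : ℝ))⁻¹ •
            Finsupp.single ((L.get j).2,
              S.node l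
                (if he : (L.get j).1.2 = p then (↑N : Multiset (PolyDec Lp d))
                 else (⟨((L.get j).1, p), hc.2, he⟩ ::ₘ (↑N : Multiset (PolyDec Lp d))))
                ↑(L.eraseIdx j)) 1
        else 0))
      + ∑ j : Fin L.length,
          (cut (t, p) (L.get j).2).sum fun ab c =>
            Finsupp.single (ab.1, S.node l ↑N ↑(L.set j ((L.get j).1, ab.2))) c

end TreeB

/-- Defining recursion of the map `Q : 𝔹 → 𝕍` collapsing polynomial decorations. -/
def QSpec {Lp Dr : Type} {d : ℕ} (SB : TreeB Lp Dr d) (SV : TreeV Lp Dr d)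
    (Qf : SB.B → SV.V) : Prop :=
  ∀ (l : Dr) (N : Multiset (PolyDec Lp d)) (M : Multiset (Odx Lp d × SB.B)),
    Qf (SB.node l N M) =
      SV.node l ((N.map fun pd => pd.1.2 - pd.1.1.2).sum) (M.map fun x => (x.1, Qf x.2))

/-- The generic summand of the multivariate Faà di Bruno formula, indexed by `(r, q⃗, m⃗)`;
it vanishes unless `(q⃗, m⃗) ∈ I(r,k)`. -/
noncomputable def fdbSummand {Lp : Type} {d : ℕ} [DecidableEq Lp] (lo : LinearOrder (MIdx d))
    (F : FnO Lp d) (k : MIdx d)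
    (p : Σ r : ℕ, (Fin r → MIdx d) × (Fin r → (Odx Lp d →₀ ℕ))) : FnO Lp d :=
  if (∀ j, p.2.2 j ≠ 0) ∧ (∀ j j' : Fin p.1, j < j' → lo.lt (p.2.1 j) (p.2.1 j')) ∧
      (∀ j, lo.lt 0 (p.2.1 j)) ∧ (∑ j, ((p.2.2 j).sum fun _ n => n) • p.2.1 j) = k then
    fun x =>
      (∏ j, (p.2.2 j).prod fun o n =>
        (x (o.1, o.2 + p.2.1 j) / (mfact (p.2.1 j) : ℝ)) ^ n / (Nat.factorial n : ℝ)) *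
        Dexp (∑ j, p.2.2 j) F x
  else 0

/-! ### Generic decorated trees -/

/-- Decorated rooted trees over node species `N` and edge species `E`,
presented abstractly. -/
structure GTree (N E : Type) where
  T : Type
  node : N → Multiset (E × T) → T
  node_bij : Function.Bijective (fun x : N × Multiset (E × T) => node x.1 x.2)
  ind : ∀ P : T → Prop, (∀ Y M, (∀ x ∈ M, P x.2) → P (node Y M)) → ∀ τ, P τ

namespace GTree

/-- Multilinear expansion of a list of edge-decorated linear combinations of trees into a
linear combination of branch multisets. -/
noncomputable def expandAux {N E : Type} (S : GTree N E) :
    List (E × (S.T →₀ ℝ)) → (Multiset (E × S.T) →₀ ℝ)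
  | [] => Finsupp.single 0 1
  | (e, w) :: L =>
      w.sum fun τ' c => (S.expandAux L).sum fun M c' => Finsupp.single ((e, τ') ::ₘ M) (c * c')

/-- Defining recursion of the functorial extension `𝔗(A)` of a linear map `A` between
the free vector spaces on the node species. -/
def MapSpec {N N' E : Type} (S : GTree N E) (S' : GTree N' E)
    (A : N → (N' →₀ ℝ)) (TA : S.T → (S'.T →₀ ℝ)) : Prop :=
  ∀ (Y : N) (L : List (E × S.T)),
    TA (S.node Y ↑L) =
      (A Y).sum fun Y' c =>
        (S'.expandAux (L.map fun x => (x.1, TA x.2))).sum fun M c' =>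
          Finsupp.single (S'.node Y' M) (c * c')

/-- Defining recursion of the inner product on `𝔗(𝖭,𝖤)` induced by an inner product on
the node species. -/
def IPSpec {N E : Type} (S : GTree N E) (ipN : N → N → ℝ) (ip : S.T → S.T → ℝ) : Prop :=
  ∀ (Y Y' : N) (L L' : List (E × S.T)),
    ip (S.node Y ↑L) (S.node Y' ↑L') =
      ipN Y Y' * ∑ s : Fin L.length ≃ Fin L'.length,
        ∏ j : Fin L.length,
          (if (L.get j).1 = (L'.get (s j)).1 then ip (L.get j).2 (L'.get (s j)).2 else 0)

end GTree

/-! ### Auxiliary analytic lemmas -/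

set_option linter.unusedSectionVars false
set_option maxHeartbeats 1000000

section AuxSm

variable {Lp : Type} {d : ℕ} [DecidableEq Lp]

/-- Smooth with finite dependence on `s`. -/
def SmOn (s : Finset (Odx Lp d)) (F : FnO Lp d) : Prop :=
  ∃ g : (↥s → ℝ) → ℝ, ContDiff ℝ (⊤ : ℕ∞) g ∧ ∀ x, F x = g fun o => x o.1

theorem SmOn.mono {s s' : Finset (Odx Lp d)} {F : FnO Lp d} (hss : s ⊆ s')
    (h : SmOn s F) : SmOn s' F := by
  obtain ⟨g, hg, hFg⟩ := h
  refine ⟨fun y => g (fun o => y ⟨o.1, hss o.2⟩), ?_, fun x => hFg x⟩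
  exact hg.comp (contDiff_pi.2 fun o => (ContinuousLinearMap.proj (R := ℝ)
    (φ := fun _ : ↥s' => ℝ) ⟨o.1, hss o.2⟩).contDiff)

theorem smOn_const {s : Finset (Odx Lp d)} (c : ℝ) : SmOn s (fun _ => c) :=
  ⟨fun _ => c, contDiff_const, fun _ => rfl⟩

theorem smOn_Xc {s : Finset (Odx Lp d)} {o : Odx Lp d} (ho : o ∈ s) : SmOn s (Xc o) :=
  ⟨fun y => y ⟨o, ho⟩, (ContinuousLinearMap.proj (R := ℝ)
    (φ := fun _ : ↥s => ℝ) ⟨o, ho⟩).contDiff, fun _ => rfl⟩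

theorem SmOn.mul {s : Finset (Odx Lp d)} {F G : FnO Lp d} (hF : SmOn s F) (hG : SmOn s G) :
    SmOn s (fun x => F x * G x) := by
  obtain ⟨g, hg, hFg⟩ := hF; obtain ⟨g', hg', hGg⟩ := hG
  exact ⟨fun y => g y * g' y, hg.mul hg', fun x => by show F x * G x = _; rw [hFg, hGg]⟩

theorem SmOn.add {s : Finset (Odx Lp d)} {F G : FnO Lp d} (hF : SmOn s F) (hG : SmOn s G) :
    SmOn s (fun x => F x + G x) := by
  obtain ⟨g, hg, hFg⟩ := hF; obtain ⟨g', hg', hGg⟩ := hG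
  exact ⟨fun y => g y + g' y, hg.add hg', fun x => by show F x + G x = _; rw [hFg, hGg]⟩

theorem smOn_prod {ι : Type*} [DecidableEq ι] {s : Finset (Odx Lp d)} (u : Finset ι) (H : ι → FnO Lp d)
    (h : ∀ j ∈ u, SmOn s (H j)) : SmOn s (fun x => ∏ j ∈ u, H j x) := by
  classical
  induction u using Finset.induction_on with
  | empty => simpa using smOn_const (s := s) 1
  | @insert a u ha ih =>
      have := (h a (Finset.mem_insert_self a u)).mul
        (ih fun j hj => h j (Finset.mem_insert_of_mem hj))
      simpa [Finset.prod_insert ha] using this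

theorem smOn_sum {ι : Type*} [DecidableEq ι] {s : Finset (Odx Lp d)} (u : Finset ι) (H : ι → FnO Lp d)
    (h : ∀ j ∈ u, SmOn s (H j)) : SmOn s (fun x => ∑ j ∈ u, H j x) := by
  classical
  induction u using Finset.induction_on with
  | empty => simpa using smOn_const (s := s) 0
  | @insert a u ha ih =>
      have := (h a (Finset.mem_insert_self a u)).add
        (ih fun j hj => h j (Finset.mem_insert_of_mem hj))
      simpa [Finset.sum_insert ha] using this

/-- Update as affine map. -/
theorem update_eq_affine {ι : Type*} [DecidableEq ι] (y : ι → ℝ) (j : ι) (t : ℝ) :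
    Function.update y j t = y + (t - y j) • (Pi.single j 1 : ι → ℝ) := by
  funext k
  by_cases h : k = j
  · subst h; simp
  · simp [Function.update_of_ne h, Pi.single_eq_of_ne h]

theorem hasDerivAt_update {ι : Type*} [Fintype ι] [DecidableEq ι] (y : ι → ℝ) (j : ι) (t : ℝ) :
    HasDerivAt (fun t => Function.update y j t) (Pi.single j 1 : ι → ℝ) t := by
  have h : HasDerivAt (fun t : ℝ => y + (t - y j) • (Pi.single j 1 : ι → ℝ))
      ((1:ℝ) • (Pi.single j 1 : ι → ℝ)) t :=
    (((hasDerivAt_id t).sub_const (y j)).smul_const _).const_add _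
  have he : (fun t : ℝ => Function.update y j t) =
      fun t : ℝ => y + (t - y j) • (Pi.single j 1 : ι → ℝ) := by
    funext t; exact update_eq_affine y j t
  rw [he]
  simpa using h

theorem key_update (s : Finset (Odx Lp d)) (x : Odx Lp d → ℝ) (o : Odx Lp d) (t : ℝ) :
    (fun o' : ↥s => Function.update x o t o'.1) =
      if h : o ∈ s then Function.update (fun o' : ↥s => x o'.1) ⟨o, h⟩ t
      else fun o' : ↥s => x o'.1 := by
  split_ifs with h
  · funext o'
    simp only [Function.update_apply, Subtype.ext_iff]
  · funext o'
    have : o'.1 ≠ o := fun he => h (he ▸ o'.2)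
    simp [Function.update_of_ne this]

/-- The key derivative computation. -/
theorem SmOn.hasDerivAt {s : Finset (Odx Lp d)} {F : FnO Lp d} (hF : SmOn s F)
    (x : Odx Lp d → ℝ) (o : Odx Lp d) (t : ℝ) :
    HasDerivAt (fun t => F (Function.update x o t))
      (if h : o ∈ s then
        fderiv ℝ (Classical.choose hF) (fun o' : ↥s => Function.update x o t o'.1)
          (Pi.single ⟨o, h⟩ 1)
       else 0) t := by
  obtain ⟨hg, hFg⟩ := Classical.choose_spec hF
  set g := Classical.choose hF
  have hfun : (fun t => F (Function.update x o t)) =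
      fun t => g (fun o' : ↥s => Function.update x o t o'.1) := by
    funext t; exact hFg _
  rw [hfun]
  split_ifs with h
  · have h1 : HasDerivAt (fun t => Function.update (fun o' : ↥s => x o'.1) ⟨o, h⟩ t)
        (Pi.single (⟨o, h⟩ : ↥s) 1) t := hasDerivAt_update _ _ _
    have h2 := (hg.differentiable (by simp) _).hasFDerivAt.comp_hasDerivAt t h1
    have h3 : (fun t => g (fun o' : ↥s => Function.update x o t o'.1)) =
        (g ∘ fun t => Function.update (fun o' : ↥s => x o'.1) ⟨o, h⟩ t) := by
      funext t; simp only [Function.comp_apply]; rw [key_update, dif_pos h]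
    rw [h3, key_update, dif_pos h]
    exact h2
  · have h3 : (fun t => g (fun o' : ↥s => Function.update x o t o'.1)) =
        fun _ => g (fun o' : ↥s => x o'.1) := by
      funext t; rw [key_update, dif_neg h]
    rw [h3]
    exact hasDerivAt_const _ _

theorem SmOn.hasDerivAt_dpart {s : Finset (Odx Lp d)} {F : FnO Lp d} (hF : SmOn s F)
    (x : Odx Lp d → ℝ) (o : Odx Lp d) :
    HasDerivAt (fun t => F (Function.update x o t)) (Dpart o F x) (x o) := by
  have h := hF.hasDerivAt x o (x o)
  rw [show Dpart o F x = deriv (fun t => F (Function.update x o t)) (x o) from rfl, h.deriv]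
  exact h

theorem SmOn.dpart_eq_zero {s : Finset (Odx Lp d)} {F : FnO Lp d} (hF : SmOn s F)
    {o : Odx Lp d} (ho : o ∉ s) : Dpart o F = 0 := by
  funext x
  have h := hF.hasDerivAt x o (x o)
  rw [dif_neg ho] at h
  show deriv _ _ = 0
  rw [h.deriv]

theorem SmOn.dpart {s : Finset (Odx Lp d)} {F : FnO Lp d} (hF : SmOn s F) (o : Odx Lp d) :
    SmOn s (Dpart o F) := by
  by_cases h : o ∈ s
  · refine ⟨fun y => fderiv ℝ (Classical.choose hF) y (Pi.single ⟨o, h⟩ 1), ?_, fun x => ?_⟩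
    · exact ((Classical.choose_spec hF).1.fderiv_right (m := (⊤ : ℕ∞))
        (by exact_mod_cast le_top)).clm_apply contDiff_const
    · have hd := hF.hasDerivAt x o (x o)
      rw [dif_pos h] at hd
      show deriv _ _ = _
      rw [hd.deriv, Function.update_eq_self]
  · rw [hF.dpart_eq_zero h]
    exact ⟨fun _ => 0, contDiff_const, fun _ => rfl⟩

theorem SmOn.dpart_mul {s : Finset (Odx Lp d)} {F G : FnO Lp d} (hF : SmOn s F)
    (hG : SmOn s G) (o : Odx Lp d) :
    Dpart o (fun x => F x * G x) = fun x => Dpart o F x * G x + F x * Dpart o G x := by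
  funext x
  have h := (hF.hasDerivAt_dpart x o).mul (hG.hasDerivAt_dpart x o)
  show deriv _ _ = _
  rw [show (fun t => (fun x => F x * G x) (Function.update x o t)) =
      fun t => F (Function.update x o t) * G (Function.update x o t) from rfl,
    show (fun t => F (Function.update x o t) * G (Function.update x o t)) =
      (fun t => F (Function.update x o t)) * (fun t => G (Function.update x o t)) from rfl, h.deriv]
  simp [Function.update_eq_self]

theorem smOn_dlist {s : Finset (Odx Lp d)} {Fl : FnO Lp d} (h : SmOn s Fl)
    (L : List (Odx Lp d)) : SmOn s (Dlist L Fl) := by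
  induction L with
  | nil => exact h
  | cons a L ih => exact ih.dpart a

theorem dpart_const (c : ℝ) (o : Odx Lp d) : Dpart o (fun _ : Odx Lp d → ℝ => c) = 0 := by
  funext x; show deriv _ _ = 0; simp

theorem dpart_Xc (o c : Odx Lp d) :
    Dpart o (Xc c) = fun _ => if c = o then (1:ℝ) else 0 := by
  funext x
  show deriv (fun t => Function.update x o t c) (x o) = _
  by_cases h : c = o
  · subst h; simp
  · simp [Function.update_of_ne h, if_neg h]

theorem pderivO_eq_sum {s : Finset (Odx Lp d)} {F : FnO Lp d} (hF : SmOn s F) (i : Fin (d+1)) :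
    pderivO i F = fun x => ∑ o ∈ s, x (o.1, o.2 + munit i) * Dpart o F x := by
  funext x
  apply finsum_eq_finset_sum_of_support_subset
  intro o ho
  simp only [Function.mem_support, ne_eq] at ho
  by_contra hos
  exact ho (by rw [hF.dpart_eq_zero hos]; simp [Xc])

theorem pderivO_const (c : ℝ) (i : Fin (d+1)) :
    pderivO i (fun _ : Odx Lp d → ℝ => c) = fun _ => 0 := by
  funext x
  refine finsum_eq_zero_of_forall_eq_zero fun o => ?_
  rw [dpart_const]; simp

theorem pderivO_Xc (c : Odx Lp d) (i : Fin (d+1)) :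
    pderivO i (Xc c) = Xc (c.1, c.2 + munit i) := by
  funext x
  have := finsum_eq_single (fun o : Odx Lp d => Xc (o.1, o.2 + munit i) x * Dpart o (Xc c) x) c
    (fun o ho => by simp only [dpart_Xc]; simp [if_neg (Ne.symm ho)])
  show finsum _ = _
  rw [this]
  simp only [dpart_Xc]
  simp [Xc]

theorem pderivO_mul {s : Finset (Odx Lp d)} {F G : FnO Lp d} (hF : SmOn s F) (hG : SmOn s G)
    (i : Fin (d+1)) :
    pderivO i (fun x => F x * G x) =
      fun x => pderivO i F x * G x + F x * pderivO i G x := by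
  funext x
  rw [pderivO_eq_sum (hF.mul hG), pderivO_eq_sum hF, pderivO_eq_sum hG]
  rw [Finset.sum_mul, Finset.mul_sum, ← Finset.sum_add_distrib]
  refine Finset.sum_congr rfl fun o _ => ?_
  rw [hF.dpart_mul hG]
  ring

theorem pderivO_prod {ι : Type*} [DecidableEq ι] {s : Finset (Odx Lp d)} (i : Fin (d+1)) (u : Finset ι)
    (H : ι → FnO Lp d) (h : ∀ j ∈ u, SmOn s (H j)) :
    pderivO i (fun x => ∏ j ∈ u, H j x) =
      fun x => ∑ j ∈ u, pderivO i (H j) x * ∏ j' ∈ u.erase j, H j' x := by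
  classical
  induction u using Finset.induction_on with
  | empty => simpa using pderivO_const (Lp := Lp) (d := d) 1 i
  | @insert a u ha ih =>
      have hprod : SmOn s (fun x => ∏ j ∈ u, H j x) :=
        smOn_prod u H fun j hj => h j (Finset.mem_insert_of_mem hj)
      have h1 : (fun x => ∏ j ∈ insert a u, H j x) =
          fun x => H a x * ∏ j ∈ u, H j x := by
        funext x; rw [Finset.prod_insert ha]
      rw [h1, pderivO_mul (h a (Finset.mem_insert_self a u)) hprod,
        ih (fun j hj => h j (Finset.mem_insert_of_mem hj))]
      funext x
      rw [Finset.sum_insert ha, Finset.erase_insert ha, Finset.mul_sum]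
      congr 1
      refine Finset.sum_congr rfl fun j hj => ?_
      have haj : a ≠ j := fun he => ha (he ▸ hj)
      rw [Finset.erase_insert_of_ne haj,
        Finset.prod_insert (fun hc => ha (Finset.mem_of_mem_erase hc))]
      ring

theorem smOn_Xpow (α : Odx Lp d →₀ ℕ) : SmOn α.support (Xpow α) := by
  refine ⟨fun y => ∏ o : ↥α.support, y o ^ α o.1, ?_, fun x => ?_⟩
  · exact contDiff_prod fun o _ => (ContinuousLinearMap.proj (R := ℝ)
      (φ := fun _ : ↥α.support => ℝ) o).contDiff.pow _
  · show α.prod (fun o n => x o ^ n) = _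
    rw [Finsupp.prod, ← Finset.prod_coe_sort]

theorem isP_smOn {Om Op : Set (Odx Lp d)} {Fl : FnO Lp d} (h : IsP Om Op Fl) :
    ∃ s, SmOn s Fl := by
  classical
  obtain ⟨m, α, G, -, -, hGsm, -, -, hFeq⟩ := h
  have hj : ∀ j : Fin m, ∃ s, SmOn s (fun x => G j x * Xpow (α j) x) := by
    intro j
    obtain ⟨s, g, hg, hxg⟩ := hGsm j
    exact ⟨s ∪ (α j).support,
      (SmOn.mono Finset.subset_union_left ⟨g, hg, hxg⟩).mul
        ((smOn_Xpow (α j)).mono Finset.subset_union_right)⟩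
  choose sj hsj using hj
  refine ⟨Finset.univ.sup sj, ?_⟩
  rw [hFeq]
  exact smOn_sum Finset.univ _ fun j _ =>
    (hsj j).mono (Finset.le_sup (Finset.mem_univ j))

/-! finsum helpers -/

theorem finsum_indicator_mul {β : Type*} (a : β) (g : β → ℝ) :
    ∑ᶠ y, (if y = a then (1:ℝ) else 0) * g y = g a := by
  rw [finsum_eq_single _ a (fun y hy => by rw [if_neg hy, zero_mul])]
  rw [if_pos rfl, one_mul]

theorem finsum_exists_indicator {ι β : Type*} {h : ι → β} (hinj : Function.Injective h)
    (g : β → ℝ) (hfin : (Function.support fun z => g (h z)).Finite) :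
    ∑ᶠ y, (if ∃ o, y = h o then (1:ℝ) else 0) * g y = ∑ᶠ o, g (h o) := by
  classical
  rw [finsum_eq_finset_sum_of_support_subset (fun z => g (h z)) (s := hfin.toFinset)
    (fun z hz => by simpa using hz)]
  rw [finsum_eq_finset_sum_of_support_subset _ (s := hfin.toFinset.image h), Finset.sum_image
    (fun a _ b _ hab => hinj hab)]
  · refine Finset.sum_congr rfl fun z _ => ?_
    rw [if_pos ⟨z, rfl⟩, one_mul]
  · intro y hy
    simp only [Function.mem_support, ne_eq] at hy
    have h1 : (if ∃ o, y = h o then (1:ℝ) else 0) ≠ 0 := fun h0 => hy (by rw [h0, zero_mul])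
    have h2 : g y ≠ 0 := fun h0 => hy (by rw [h0, mul_zero])
    obtain ⟨o, rfl⟩ : ∃ o, y = h o := by by_contra hc; exact h1 (if_neg hc)
    exact Finset.mem_image_of_mem h (by simpa using h2)

theorem finsum_comp_inj {ι β : Type*} {f : ι → β} (hf : Function.Injective f)
    (c : ι → ℝ) (g : β → ℝ) (hfin : (Function.support fun z => c z * g (f z)).Finite) :
    ∑ᶠ y, (∑ᶠ z, c z * (if y = f z then (1:ℝ) else 0)) * g y = ∑ᶠ z, c z * g (f z) := by
  classical
  rw [finsum_eq_finset_sum_of_support_subset (fun z => c z * g (f z)) (s := hfin.toFinset)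
    (fun z hz => by simpa using hz)]
  rw [finsum_eq_finset_sum_of_support_subset _ (s := hfin.toFinset.image f), Finset.sum_image
    (fun a _ b _ hab => hf hab)]
  · refine Finset.sum_congr rfl fun z _ => ?_
    congr 1
    rw [finsum_eq_single _ z
      (fun z' hz' => by rw [if_neg (fun he => hz' (hf he.symm)), mul_zero])]
    rw [if_pos rfl, mul_one]
  · intro y hy
    simp only [Function.mem_support, ne_eq] at hy
    have h2 : g y ≠ 0 := fun h0 => hy (by rw [h0, mul_zero])
    have h1 : (∑ᶠ z, c z * (if y = f z then (1:ℝ) else 0)) ≠ 0 :=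
      fun h0 => hy (by rw [h0, zero_mul])
    have h3 : ∃ z, c z * (if y = f z then (1:ℝ) else 0) ≠ 0 := by
      by_contra hc
      push_neg at hc
      exact h1 (finsum_eq_zero_of_forall_eq_zero hc)
    obtain ⟨z, hz⟩ := h3
    have hyz : y = f z := by by_contra hne; exact hz (by rw [if_neg hne, mul_zero])
    have hcz : c z ≠ 0 := fun h0 => hz (by rw [h0, zero_mul])
    subst hyz
    exact Finset.mem_image_of_mem f (by simp [hcz, h2])

end AuxSm

/-! ### Auxiliary combinatorial lemmas -/

section AuxTree

variable {Lp Dr : Type} {d : ℕ} [DecidableEq Lp]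

theorem node_injB (SB : TreeB Lp Dr d) {l l' : Dr} {N N' : Multiset (PolyDec Lp d)}
    {M M' : Multiset (Odx Lp d × SB.B)} (h : SB.node l N M = SB.node l' N' M') :
    l = l' ∧ N = N' ∧ M = M' := by
  have := SB.node_bij.injective (a₁ := (l, N, M)) (a₂ := (l', N', M')) h
  refine ⟨congrArg Prod.fst this, ?_, ?_⟩
  · exact congrArg (fun p => p.2.1) this
  · exact congrArg (fun p => p.2.2) this

theorem list_set_coe_inj {α : Type*} (L : List α) (j : ℕ) (hj : j < L.length) (a b : α)
    (h : (↑(L.set j a) : Multiset α) = ↑(L.set j b)) : a = b := by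
  rw [List.set_eq_take_cons_drop a hj, List.set_eq_take_cons_drop b hj] at h
  have h2 : (↑(L.take j) : Multiset α) + a ::ₘ ↑(L.drop (j+1)) =
      (↑(L.take j) : Multiset α) + b ::ₘ ↑(L.drop (j+1)) := by
    rw [Multiset.cons_coe, Multiset.cons_coe, Multiset.coe_add, Multiset.coe_add]
    exact h
  exact (Multiset.cons_inj_left _).1 (add_left_cancel h2)

theorem list_set_get_self {α : Type*} (L : List α) (j : ℕ) (hj : j < L.length) :
    L.set j L[j] = L := by
  apply List.ext_getElem (by simp)
  intro n h1 h2
  rw [List.getElem_set]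
  split
  · next hh => subst hh; rfl
  · rfl

theorem prod_list_set {α M : Type*} [CommMonoid M] (L : List α) (j : Fin L.length) (a : α)
    (f : α → M) :
    (∏ i : Fin (L.set j.1 a).length, f ((L.set j.1 a).get i)) =
      f a * ∏ i ∈ Finset.univ.erase j, f (L.get i) := by
  classical
  have hlen : (L.set j.1 a).length = L.length := List.length_set
  have h1 : (∏ i : Fin (L.set j.1 a).length, f ((L.set j.1 a).get i)) =
      ∏ i : Fin L.length, f (if j = i then a else L.get i) := by
    refine Fintype.prod_equiv (finCongr hlen) _ _ fun i => ?_
    congr 1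
    rw [List.get_eq_getElem, List.getElem_set]
    have hei : ((finCongr hlen i : Fin L.length) : ℕ) = (i : ℕ) := rfl
    by_cases h : (j : ℕ) = (i : ℕ)
    · rw [if_pos h, if_pos (Fin.ext (by rw [hei]; exact h))]
    · rw [if_neg h, if_neg (fun hc => h (by rw [← hei]; exact congrArg Fin.val hc))]
      rfl
  rw [h1, ← Finset.mul_prod_erase Finset.univ _ (Finset.mem_univ j), if_pos rfl]
  congr 1
  refine Finset.prod_congr rfl fun i hi => ?_
  rw [if_neg (Finset.ne_of_mem_erase hi).symm]

theorem prod_list_cons {α M : Type*} [CommMonoid M] (a : α) (L : List α) (f : α → M) :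
    (∏ i : Fin (a :: L).length, f ((a :: L).get i)) =
      f a * ∏ i : Fin L.length, f (L.get i) := by
  have h : (∏ i : Fin (L.length + 1), f ((a :: L).get i)) =
      f a * ∏ i : Fin L.length, f (L.get i) := by
    rw [Fin.prod_univ_succ]; rfl
  exact h

end AuxTree

/-! ### The three factors of `Υ̊` at a node, and evaluation lemmas -/

section AuxUps

variable {Lp Dr : Type} {d : ℕ} [DecidableEq Lp]

/-- The polynomial-decoration factor. -/
noncomputable def AfD (Nl : List (PolyDec Lp d)) : FnO Lp d :=
  fun x => ∏ ib : Fin Nl.length, x ((Nl.get ib).1.1.1, (Nl.get ib).1.2)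

/-- The subtree factor. -/
noncomputable def BfD {SB : TreeB Lp Dr d} (UpsB : Lp → SB.B → FnO Lp d)
    (Ll : List (Odx Lp d × SB.B)) : FnO Lp d :=
  fun x => ∏ j : Fin Ll.length, UpsB (Ll.get j).1.1 (Ll.get j).2 x

/-- The derivative factor. -/
noncomputable def CfD {SB : TreeB Lp Dr d} (F : Lp → Dr → FnO Lp d) (t : Lp) (l : Dr)
    (Nl : List (PolyDec Lp d)) (Ll : List (Odx Lp d × SB.B)) : FnO Lp d :=
  Dlist (Nl.map (fun pd => pd.1.1) ++ Ll.map Prod.fst) (F t l)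

variable {SB : TreeB Lp Dr d} {F : Lp → Dr → FnO Lp d} {UpsB : Lp → SB.B → FnO Lp d}

theorem ups_node_eval (hUpsB : SB.UpsSpec F UpsB) (t : Lp) (l : Dr)
    (Nl : List (PolyDec Lp d)) (Ll : List (Odx Lp d × SB.B)) :
    UpsB t (SB.node l ↑Nl ↑Ll) =
      fun x => AfD Nl x * BfD UpsB Ll x * CfD (SB := SB) F t l Nl Ll x := by
  rw [hUpsB t l Nl Ll]; rfl

theorem ups_bump_eval (hUpsB : SB.UpsSpec F UpsB) (t : Lp) (l : Dr)
    (Nl : List (PolyDec Lp d)) (Ll : List (Odx Lp d × SB.B)) (i : Fin (d+1))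
    (ib : Fin Nl.length) :
    UpsB t (SB.node l ↑(Nl.set ↑ib ((Nl.get ib).bump i)) ↑Ll) = fun x =>
      (x ((Nl.get ib).1.1.1, (Nl.get ib).1.2 + munit i) *
        ∏ ib' ∈ Finset.univ.erase ib, x ((Nl.get ib').1.1.1, (Nl.get ib').1.2)) *
      BfD UpsB Ll x * CfD (SB := SB) F t l Nl Ll x := by
  rw [hUpsB t l _ Ll]
  funext x
  congr 1
  congr 1
  · exact prod_list_set Nl ib ((Nl.get ib).bump i) (fun pd => x (pd.1.1.1, pd.1.2))
  · show CfD (SB := SB) F t l (Nl.set ↑ib ((Nl.get ib).bump i)) Ll x = _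
    unfold CfD
    congr 2
    rw [List.map_set]
    show (Nl.map fun pd => pd.1.1).set ↑ib ((Nl.get ib).1.1) = _
    have hib : (ib : ℕ) < (Nl.map fun pd => pd.1.1).length := by
      simpa using ib.2
    have : (Nl.get ib).1.1 = (Nl.map fun pd => pd.1.1)[(ib : ℕ)] := by
      rw [List.getElem_map]
      rfl
    rw [this, list_set_get_self _ _ hib]

theorem ups_fresh_eval (hUpsB : SB.UpsSpec F UpsB) (t : Lp) (l : Dr)
    (Nl : List (PolyDec Lp d)) (Ll : List (Odx Lp d × SB.B)) (i : Fin (d+1))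
    (o : Odx Lp d) :
    UpsB t (SB.node l (freshPD o i ::ₘ ↑Nl) ↑Ll) = fun x =>
      x (o.1, o.2 + munit i) *
        (AfD Nl x * BfD UpsB Ll x * Dpart o (CfD (SB := SB) F t l Nl Ll) x) := by
  rw [Multiset.cons_coe, hUpsB t l (freshPD o i :: Nl) Ll]
  funext x
  have h1 : (∏ i' : Fin (freshPD o i :: Nl).length,
      x (((freshPD o i :: Nl).get i').1.1.1, ((freshPD o i :: Nl).get i').1.2)) =
      x (o.1, o.2 + munit i) * AfD Nl x :=
    prod_list_cons (freshPD o i) Nl (fun pd => x (pd.1.1.1, pd.1.2))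
  rw [h1]
  have h2 : Dlist ((freshPD o i :: Nl).map (fun pd => pd.1.1) ++ Ll.map Prod.fst) (F t l) =
      Dpart o (CfD (SB := SB) F t l Nl Ll) := rfl
  rw [h2]
  show x (o.1, o.2 + munit i) * AfD Nl x * BfD UpsB Ll x * _ = _
  ring

theorem ups_replace_eval (hUpsB : SB.UpsSpec F UpsB) (t : Lp) (l : Dr)
    (Nl : List (PolyDec Lp d)) (Ll : List (Odx Lp d × SB.B)) (j : Fin Ll.length)
    (σ' : SB.B) :
    UpsB t (SB.node l ↑Nl ↑(Ll.set ↑j ((Ll.get j).1, σ'))) = fun x =>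
      AfD Nl x *
      (UpsB (Ll.get j).1.1 σ' x *
        ∏ j' ∈ Finset.univ.erase j, UpsB (Ll.get j').1.1 (Ll.get j').2 x) *
      CfD (SB := SB) F t l Nl Ll x := by
  rw [hUpsB t l Nl _]
  funext x
  congr 1
  congr 1
  · exact prod_list_set Ll j ((Ll.get j).1, σ') (fun e => UpsB e.1.1 e.2 x)
  · show CfD (SB := SB) F t l Nl (Ll.set ↑j ((Ll.get j).1, σ')) x = _
    unfold CfD
    congr 2
    rw [List.map_set]
    have hj : (j : ℕ) < (Ll.map Prod.fst).length := by simpa using j.2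
    have : (((Ll.get j).1, σ') : Odx Lp d × SB.B).1 = (Ll.map Prod.fst)[(j : ℕ)] := by
      rw [List.getElem_map]
      rfl
    rw [this, list_set_get_self _ _ hj]

theorem fresh_inj (SB : TreeB Lp Dr d) (l : Dr) (Nl : Multiset (PolyDec Lp d))
    (Ll : Multiset (Odx Lp d × SB.B)) (i : Fin (d+1)) :
    Function.Injective (fun o : Odx Lp d => SB.node l (freshPD o i ::ₘ Nl) Ll) := by
  intro a b h
  have h2 := (node_injB SB h).2.1
  have h3 := (Multiset.cons_inj_left _).1 h2
  exact congrArg (fun pd : PolyDec Lp d => pd.1.1) h3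

theorem replace_inj (SB : TreeB Lp Dr d) (l : Dr) (Nl : Multiset (PolyDec Lp d))
    (Ll : List (Odx Lp d × SB.B)) (j : Fin Ll.length) (p : Odx Lp d × SB.B) :
    Function.Injective (fun σ' : SB.B => SB.node l Nl ↑(Ll.set ↑j (p.1, σ'))) := by
  intro a b h
  have h2 := (node_injB SB h).2.2
  have h3 := list_set_coe_inj Ll j.1 j.2 _ _ h2
  exact congrArg Prod.snd h3

end AuxUps


/-- Lemma `lem:graftMorphism`, second identity: the raising morphism
property of `Υ̊`: the map `Υ̊^F` vanishes on all but finitely many of the trees appearing in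
the formal series `↑_l σ`, and `Υ̊^F[↑_l σ] = ∂_l Υ̊^F[σ]` componentwise. -/
theorem statement3
    {d : ℕ} {Lp Dr : Type} [Fintype Lp] [DecidableEq Lp]
    (Om Op : Set (Odx Lp d))
    (hdisj : ∀ o, ¬(o ∈ Om ∧ o ∈ Op)) (hcover : ∀ o, o ∈ Om ∨ o ∈ Op)
    (F : Lp → Dr → FnO Lp d) (hF : ∀ t l, IsP Om Op (F t l))
    (SB : TreeB Lp Dr d)
    (UpsB : Lp → SB.B → FnO Lp d) (hUpsB : SB.UpsSpec F UpsB)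
    (raiseB : Fin (d+1) → SB.B → (SB.B → ℝ)) (hraiseB : SB.RaiseSpec raiseB) :
    (∀ (i : Fin (d+1)) (σ : SB.B),
      {σ'' : SB.B | raiseB i σ σ'' ≠ 0 ∧ ∃ t, UpsB t σ'' ≠ 0}.Finite) ∧
      ∀ (i : Fin (d+1)) (σ : SB.B) (t : Lp),
        (fun x => ∑ᶠ σ'' : SB.B, raiseB i σ σ'' * UpsB t σ'' x) =
          pderivO i (UpsB t σ) := by
  classical
  have hFsm : ∀ t lb, ∃ s, SmOn s (F t lb) := fun t lb => isP_smOn (hF t lb)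
  suffices main : ∀ σ : SB.B,
      (∀ t, ∃ s, SmOn s (UpsB t σ)) ∧
      (∀ i, {σ'' : SB.B | raiseB i σ σ'' ≠ 0 ∧ ∃ t, UpsB t σ'' ≠ 0}.Finite) ∧
      (∀ i t, (fun x => ∑ᶠ σ'' : SB.B, raiseB i σ σ'' * UpsB t σ'' x) =
        pderivO i (UpsB t σ)) by
    exact ⟨fun i σ => (main σ).2.1 i, fun i σ t => (main σ).2.2 i t⟩
  refine SB.ind _ fun l N M IH => ?_
  obtain ⟨Nl, rfl⟩ : ∃ Nl : List (PolyDec Lp d), (↑Nl : Multiset (PolyDec Lp d)) = N :=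
    ⟨N.toList, Multiset.coe_toList N⟩
  obtain ⟨Ll, rfl⟩ : ∃ Ll : List (Odx Lp d × SB.B), (↑Ll : Multiset (Odx Lp d × SB.B)) = M :=
    ⟨M.toList, Multiset.coe_toList M⟩
  have IHj : ∀ j : Fin Ll.length,
      (∀ t, ∃ s, SmOn s (UpsB t (Ll.get j).2)) ∧
      (∀ i, {σ' : SB.B | raiseB i (Ll.get j).2 σ' ≠ 0 ∧ ∃ t, UpsB t σ' ≠ 0}.Finite) ∧
      (∀ i t, (fun x => ∑ᶠ σ' : SB.B, raiseB i (Ll.get j).2 σ' * UpsB t σ' x) =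
        pderivO i (UpsB t (Ll.get j).2)) :=
    fun j => IH (Ll.get j) (Multiset.mem_coe.mpr (List.get_mem Ll j))
  -- common smooth finsets
  have hcommon : ∀ t, ∃ s : Finset (Odx Lp d),
      SmOn s (AfD Nl) ∧
      (∀ j : Fin Ll.length, SmOn s (UpsB (Ll.get j).1.1 (Ll.get j).2)) ∧
      SmOn s (CfD (SB := SB) F t l Nl Ll) := by
    intro t
    choose sU hsU using fun j : Fin Ll.length => (IHj j).1 (Ll.get j).1.1
    obtain ⟨sF, hsF⟩ := hFsm t l
    refine ⟨((Nl.map (fun pd => (pd.1.1.1, pd.1.2))).toFinset ∪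
        Finset.univ.sup sU) ∪ sF, ?_, ?_, ?_⟩
    · exact smOn_prod Finset.univ
        (fun ib : Fin Nl.length => Xc ((Nl.get ib).1.1.1, (Nl.get ib).1.2))
        (fun ib _ => smOn_Xc (Finset.mem_union_left _ (Finset.mem_union_left _
          (List.mem_toFinset.2 (List.mem_map_of_mem (List.get_mem Nl ib))))))
    · intro j
      exact (hsU j).mono (Finset.Subset.trans (Finset.le_sup (Finset.mem_univ j))
        (Finset.Subset.trans Finset.subset_union_right Finset.subset_union_left))
    · exact (smOn_dlist hsF _).mono Finset.subset_union_right
  -- part 1: smoothness of Υ̊ at the node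
  have part1 : ∀ t, ∃ s, SmOn s (UpsB t (SB.node l ↑Nl ↑Ll)) := by
    intro t
    obtain ⟨s, hA, hU, hC⟩ := hcommon t
    refine ⟨s, ?_⟩
    rw [ups_node_eval hUpsB t l Nl Ll]
    exact (hA.mul (smOn_prod Finset.univ _ fun j _ => hU j)).mul hC
  -- nonvanishing transfer
  have freshNe : ∀ (i : Fin (d+1)) (o : Odx Lp d) (t : Lp),
      UpsB t (SB.node l (freshPD o i ::ₘ ↑Nl) ↑Ll) ≠ 0 →
      Dpart o (CfD (SB := SB) F t l Nl Ll) ≠ 0 := by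
    intro i o t hne h0
    apply hne
    rw [ups_fresh_eval hUpsB t l Nl Ll i o]
    funext x
    rw [h0]
    simp
  have replNe : ∀ (j : Fin Ll.length) (σ' : SB.B) (t : Lp),
      UpsB t (SB.node l ↑Nl ↑(Ll.set ↑j ((Ll.get j).1, σ'))) ≠ 0 →
      UpsB (Ll.get j).1.1 σ' ≠ 0 := by
    intro j σ' t hne h0
    apply hne
    rw [ups_replace_eval hUpsB t l Nl Ll j σ']
    funext x
    rw [h0]
    simp
  -- choose per-t smooth finsets (for finiteness)
  choose sC hsC using hcommon
  -- part 2: finiteness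
  have part2 : ∀ i : Fin (d+1), {σ'' : SB.B |
      raiseB i (SB.node l ↑Nl ↑Ll) σ'' ≠ 0 ∧ ∃ t, UpsB t σ'' ≠ 0}.Finite := by
    intro i
    have f1 : (Set.range fun ib : Fin Nl.length =>
        SB.node l ↑(Nl.set ↑ib ((Nl.get ib).bump i)) ↑Ll).Finite := Set.finite_range _
    have f2 : (⋃ t : Lp, (fun o : Odx Lp d =>
        SB.node l (freshPD o i ::ₘ ↑Nl) ↑Ll) '' ↑(sC t)).Finite :=
      Set.finite_iUnion fun t => (sC t).finite_toSet.image _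
    have f3 : (⋃ j : Fin Ll.length, (fun σ' : SB.B =>
        SB.node l ↑Nl ↑(Ll.set ↑j ((Ll.get j).1, σ'))) ''
        {σ' : SB.B | raiseB i (Ll.get j).2 σ' ≠ 0 ∧ ∃ t, UpsB t σ' ≠ 0}).Finite :=
      Set.finite_iUnion fun j => ((IHj j).2.1 i).image _
    refine Set.Finite.subset ((f1.union f2).union f3) ?_
    rintro σ'' ⟨hr, t', ht'⟩
    have hr2 : (∑ ib : Fin Nl.length,
          if σ'' = SB.node l ↑(Nl.set ↑ib ((Nl.get ib).bump i)) ↑Ll then (1:ℝ) else 0)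
        + (if ∃ o : Odx Lp d, σ'' = SB.node l (freshPD o i ::ₘ ↑Nl) ↑Ll then (1:ℝ) else 0)
        + (∑ j : Fin Ll.length, ∑ᶠ σ' : SB.B, raiseB i (Ll.get j).2 σ' *
            (if σ'' = SB.node l ↑Nl ↑(Ll.set ↑j ((Ll.get j).1, σ')) then 1 else 0)) ≠ 0 := by
      rw [hraiseB i l Nl Ll] at hr
      exact hr
    by_cases h1 : (∑ ib : Fin Nl.length,
        if σ'' = SB.node l ↑(Nl.set ↑ib ((Nl.get ib).bump i)) ↑Ll then (1:ℝ) else 0) = 0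
    · by_cases h2 : (if ∃ o : Odx Lp d, σ'' = SB.node l (freshPD o i ::ₘ ↑Nl) ↑Ll
          then (1:ℝ) else 0) = 0
      · -- replacement case
        have h3 : (∑ j : Fin Ll.length, ∑ᶠ σ' : SB.B, raiseB i (Ll.get j).2 σ' *
            (if σ'' = SB.node l ↑Nl ↑(Ll.set ↑j ((Ll.get j).1, σ')) then 1 else 0)) ≠ 0 :=
          fun h3 => hr2 (by rw [h1, h2, h3]; ring)
        obtain ⟨j, -, hj⟩ := Finset.exists_ne_zero_of_sum_ne_zero h3
        obtain ⟨σ', hσ'⟩ : ∃ σ' : SB.B, raiseB i (Ll.get j).2 σ' *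
            (if σ'' = SB.node l ↑Nl ↑(Ll.set ↑j ((Ll.get j).1, σ')) then 1 else 0) ≠ 0 := by
          by_contra hc
          push_neg at hc
          exact hj (finsum_eq_zero_of_forall_eq_zero hc)
        have heq : σ'' = SB.node l ↑Nl ↑(Ll.set ↑j ((Ll.get j).1, σ')) := by
          by_contra hne
          exact hσ' (by rw [if_neg hne, mul_zero])
        have hrr : raiseB i (Ll.get j).2 σ' ≠ 0 := fun h0 => hσ' (by rw [h0, zero_mul])
        subst heq
        refine Or.inr (Set.mem_iUnion.2 ⟨j, ⟨σ', ⟨hrr, (Ll.get j).1.1, replNe j σ' t' ht'⟩, rfl⟩⟩)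
      · -- fresh case
        have hex : ∃ o : Odx Lp d, σ'' = SB.node l (freshPD o i ::ₘ ↑Nl) ↑Ll := by
          by_contra hc
          exact h2 (if_neg hc)
        obtain ⟨o, rfl⟩ := hex
        have hD : Dpart o (CfD (SB := SB) F t' l Nl Ll) ≠ 0 := freshNe i o t' ht'
        have ho : o ∈ sC t' := by
          by_contra hos
          exact hD ((hsC t').2.2.dpart_eq_zero hos)
        exact Or.inl (Or.inr (Set.mem_iUnion.2 ⟨t', ⟨o, ho, rfl⟩⟩))
    · -- bump case
      obtain ⟨ib, -, hib⟩ := Finset.exists_ne_zero_of_sum_ne_zero h1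
      have heq : σ'' = SB.node l ↑(Nl.set ↑ib ((Nl.get ib).bump i)) ↑Ll := by
        by_contra hne
        exact hib (if_neg hne)
      exact Or.inl (Or.inl ⟨ib, heq.symm⟩)
  -- part 3: the identity
  have part3 : ∀ (i : Fin (d+1)) (t : Lp),
      (fun x => ∑ᶠ σ'' : SB.B, raiseB i (SB.node l ↑Nl ↑Ll) σ'' * UpsB t σ'' x) =
        pderivO i (UpsB t (SB.node l ↑Nl ↑Ll)) := by
    intro i t
    obtain ⟨hA, hU, hC⟩ := hsC t
    have hB : SmOn (sC t) (BfD UpsB Ll) := smOn_prod Finset.univ _ fun j _ => hU j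
    funext x
    -- RHS computation
    have hpA : pderivO i (AfD Nl) = fun x => ∑ ib : Fin Nl.length,
        x ((Nl.get ib).1.1.1, (Nl.get ib).1.2 + munit i) *
          ∏ ib' ∈ Finset.univ.erase ib, x ((Nl.get ib').1.1.1, (Nl.get ib').1.2) := by
      have h1 := pderivO_prod i Finset.univ
        (fun ib : Fin Nl.length => Xc ((Nl.get ib).1.1.1, (Nl.get ib).1.2))
        (fun ib _ => smOn_Xc (s := (Nl.map (fun pd => (pd.1.1.1, pd.1.2))).toFinset)
          (List.mem_toFinset.2 (List.mem_map_of_mem (List.get_mem Nl ib))))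
      simp only [pderivO_Xc] at h1
      exact h1
    have hpB : pderivO i (BfD UpsB Ll) = fun x => ∑ j : Fin Ll.length,
        pderivO i (UpsB (Ll.get j).1.1 (Ll.get j).2) x *
          ∏ j' ∈ Finset.univ.erase j, UpsB (Ll.get j').1.1 (Ll.get j').2 x :=
      pderivO_prod i Finset.univ _ (fun j _ => hU j)
    have hRHS : pderivO i (UpsB t (SB.node l ↑Nl ↑Ll)) x =
        (∑ ib : Fin Nl.length,
          (x ((Nl.get ib).1.1.1, (Nl.get ib).1.2 + munit i) *
            ∏ ib' ∈ Finset.univ.erase ib, x ((Nl.get ib').1.1.1, (Nl.get ib').1.2)) *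
            BfD UpsB Ll x * CfD (SB := SB) F t l Nl Ll x)
        + AfD Nl x * BfD UpsB Ll x * pderivO i (CfD (SB := SB) F t l Nl Ll) x
        + (∑ j : Fin Ll.length, AfD Nl x *
            (pderivO i (UpsB (Ll.get j).1.1 (Ll.get j).2) x *
              ∏ j' ∈ Finset.univ.erase j, UpsB (Ll.get j').1.1 (Ll.get j').2 x) *
            CfD (SB := SB) F t l Nl Ll x) := by
      rw [ups_node_eval hUpsB t l Nl Ll]
      simp only [pderivO_mul (hA.mul hB) hC i, pderivO_mul hA hB i, hpA, hpB]
      simp only [Finset.sum_mul, Finset.mul_sum, add_mul]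
      ring
    -- support finiteness for splitting
    have hfin1 : (Function.support fun σ'' : SB.B => (∑ ib : Fin Nl.length,
        if σ'' = SB.node l ↑(Nl.set ↑ib ((Nl.get ib).bump i)) ↑Ll then (1:ℝ) else 0) *
        UpsB t σ'' x).Finite := by
      refine Set.Finite.subset (Set.finite_range fun ib : Fin Nl.length =>
        SB.node l ↑(Nl.set ↑ib ((Nl.get ib).bump i)) ↑Ll) ?_
      intro σ'' h
      simp only [Function.mem_support] at h
      have hT : (∑ ib : Fin Nl.length,
          if σ'' = SB.node l ↑(Nl.set ↑ib ((Nl.get ib).bump i)) ↑Ll then (1:ℝ) else 0) ≠ 0 :=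
        fun h0 => h (by rw [h0, zero_mul])
      obtain ⟨ib, -, hib⟩ := Finset.exists_ne_zero_of_sum_ne_zero hT
      have heq : σ'' = SB.node l ↑(Nl.set ↑ib ((Nl.get ib).bump i)) ↑Ll := by
        by_contra hne
        exact hib (if_neg hne)
      exact ⟨ib, heq.symm⟩
    have hfreshsub : (Function.support fun o : Odx Lp d =>
        UpsB t (SB.node l (freshPD o i ::ₘ ↑Nl) ↑Ll) x) ⊆ ↑(sC t) := by
      intro o ho
      simp only [Function.mem_support] at ho
      by_contra hos
      refine ho ?_
      simp only [ups_fresh_eval hUpsB t l Nl Ll i o, hC.dpart_eq_zero hos]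
      simp
    have hfin2 : (Function.support fun σ'' : SB.B =>
        (if ∃ o : Odx Lp d, σ'' = SB.node l (freshPD o i ::ₘ ↑Nl) ↑Ll then (1:ℝ) else 0) *
        UpsB t σ'' x).Finite := by
      refine Set.Finite.subset ((sC t).finite_toSet.image fun o : Odx Lp d =>
        SB.node l (freshPD o i ::ₘ ↑Nl) ↑Ll) ?_
      intro σ'' h
      simp only [Function.mem_support] at h
      have hT : (if ∃ o : Odx Lp d, σ'' = SB.node l (freshPD o i ::ₘ ↑Nl) ↑Ll
          then (1:ℝ) else 0) ≠ 0 := fun h0 => h (by rw [h0, zero_mul])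
      have hUx : UpsB t σ'' x ≠ 0 := fun h0 => h (by rw [h0, mul_zero])
      have hex : ∃ o : Odx Lp d, σ'' = SB.node l (freshPD o i ::ₘ ↑Nl) ↑Ll := by
        by_contra hc
        exact hT (if_neg hc)
      obtain ⟨o, rfl⟩ := hex
      exact ⟨o, hfreshsub (Function.mem_support.2 hUx), rfl⟩
    have hjset : ∀ j : Fin Ll.length, (Function.support fun σ' : SB.B =>
        raiseB i (Ll.get j).2 σ' * UpsB (Ll.get j).1.1 σ' x) ⊆
        {σ' : SB.B | raiseB i (Ll.get j).2 σ' ≠ 0 ∧ ∃ t', UpsB t' σ' ≠ 0} := by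
      intro j σ' h
      simp only [Function.mem_support] at h
      refine ⟨fun h0 => h (by rw [h0, zero_mul]), (Ll.get j).1.1, fun h0 => h ?_⟩
      rw [h0]
      simp
    have hfin3 : (Function.support fun σ'' : SB.B =>
        (∑ j : Fin Ll.length, ∑ᶠ σ' : SB.B, raiseB i (Ll.get j).2 σ' *
          (if σ'' = SB.node l ↑Nl ↑(Ll.set ↑j ((Ll.get j).1, σ')) then 1 else 0)) *
        UpsB t σ'' x).Finite := by
      refine Set.Finite.subset (Set.finite_iUnion fun j : Fin Ll.length =>
        ((IHj j).2.1 i).image fun σ' : SB.B =>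
          SB.node l ↑Nl ↑(Ll.set ↑j ((Ll.get j).1, σ'))) ?_
      intro σ'' h
      simp only [Function.mem_support] at h
      have hUx : UpsB t σ'' x ≠ 0 := fun h0 => h (by rw [h0, mul_zero])
      have hT : (∑ j : Fin Ll.length, ∑ᶠ σ' : SB.B, raiseB i (Ll.get j).2 σ' *
          (if σ'' = SB.node l ↑Nl ↑(Ll.set ↑j ((Ll.get j).1, σ')) then 1 else 0)) ≠ 0 :=
        fun h0 => h (by rw [h0, zero_mul])
      obtain ⟨j, -, hj⟩ := Finset.exists_ne_zero_of_sum_ne_zero hT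
      obtain ⟨σ', hσ'⟩ : ∃ σ' : SB.B, raiseB i (Ll.get j).2 σ' *
          (if σ'' = SB.node l ↑Nl ↑(Ll.set ↑j ((Ll.get j).1, σ')) then 1 else 0) ≠ 0 := by
        by_contra hc
        push_neg at hc
        exact hj (finsum_eq_zero_of_forall_eq_zero hc)
      have heq : σ'' = SB.node l ↑Nl ↑(Ll.set ↑j ((Ll.get j).1, σ')) := by
        by_contra hne
        exact hσ' (by rw [if_neg hne, mul_zero])
      have hrr : raiseB i (Ll.get j).2 σ' ≠ 0 := fun h0 => hσ' (by rw [h0, zero_mul])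
      subst heq
      exact Set.mem_iUnion.2 ⟨j, ⟨σ', ⟨hrr, (Ll.get j).1.1,
        replNe j σ' t fun h0 => hUx (by rw [h0]; simp)⟩, rfl⟩⟩
    -- split the finsum
    have h0 : ∀ σ'' : SB.B, raiseB i (SB.node l ↑Nl ↑Ll) σ'' * UpsB t σ'' x =
        (∑ ib : Fin Nl.length,
          if σ'' = SB.node l ↑(Nl.set ↑ib ((Nl.get ib).bump i)) ↑Ll then (1:ℝ) else 0) *
          UpsB t σ'' x +
        ((if ∃ o : Odx Lp d, σ'' = SB.node l (freshPD o i ::ₘ ↑Nl) ↑Ll then (1:ℝ) else 0) *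
          UpsB t σ'' x +
        (∑ j : Fin Ll.length, ∑ᶠ σ' : SB.B, raiseB i (Ll.get j).2 σ' *
          (if σ'' = SB.node l ↑Nl ↑(Ll.set ↑j ((Ll.get j).1, σ')) then 1 else 0)) *
          UpsB t σ'' x) := by
      intro σ''
      rw [hraiseB i l Nl Ll]
      show ((∑ ib : Fin Nl.length,
          if σ'' = SB.node l ↑(Nl.set ↑ib ((Nl.get ib).bump i)) ↑Ll then (1:ℝ) else 0)
        + (if ∃ o : Odx Lp d, σ'' = SB.node l (freshPD o i ::ₘ ↑Nl) ↑Ll then (1:ℝ) else 0)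
        + (∑ j : Fin Ll.length, ∑ᶠ σ' : SB.B, raiseB i (Ll.get j).2 σ' *
            (if σ'' = SB.node l ↑Nl ↑(Ll.set ↑j ((Ll.get j).1, σ')) then 1 else 0))) *
          UpsB t σ'' x = _
      ring
    rw [finsum_congr h0, finsum_add_distrib hfin1
      ((hfin2.union hfin3).subset (Function.support_add _ _)),
      finsum_add_distrib hfin2 hfin3]
    -- E1
    have hE1 : (∑ᶠ σ'' : SB.B, (∑ ib : Fin Nl.length,
        if σ'' = SB.node l ↑(Nl.set ↑ib ((Nl.get ib).bump i)) ↑Ll then (1:ℝ) else 0) *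
        UpsB t σ'' x) =
        ∑ ib : Fin Nl.length,
          (x ((Nl.get ib).1.1.1, (Nl.get ib).1.2 + munit i) *
            ∏ ib' ∈ Finset.univ.erase ib, x ((Nl.get ib').1.1.1, (Nl.get ib').1.2)) *
          BfD UpsB Ll x * CfD (SB := SB) F t l Nl Ll x := by
      have h1 : (fun σ'' : SB.B => (∑ ib : Fin Nl.length,
          if σ'' = SB.node l ↑(Nl.set ↑ib ((Nl.get ib).bump i)) ↑Ll then (1:ℝ) else 0) *
          UpsB t σ'' x) =
          fun σ'' => ∑ ib : Fin Nl.length,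
            (if σ'' = SB.node l ↑(Nl.set ↑ib ((Nl.get ib).bump i)) ↑Ll then (1:ℝ) else 0) *
            UpsB t σ'' x := by
        funext σ''
        rw [Finset.sum_mul]
      have hsup : ∀ ib : Fin Nl.length, (Function.support fun σ'' : SB.B =>
          (if σ'' = SB.node l ↑(Nl.set ↑ib ((Nl.get ib).bump i)) ↑Ll then (1:ℝ) else 0) *
          UpsB t σ'' x).Finite := by
        intro ib
        refine Set.Finite.subset
          (Set.finite_singleton (SB.node l ↑(Nl.set ↑ib ((Nl.get ib).bump i)) ↑Ll)) ?_
        intro σ'' h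
        simp only [Function.mem_support] at h
        by_contra hc
        refine h ?_
        rw [if_neg (by simpa using hc), zero_mul]
      rw [h1, finsum_sum_comm _ _ (fun ib _ => hsup ib)]
      refine Finset.sum_congr rfl fun ib _ => ?_
      rw [finsum_indicator_mul (SB.node l ↑(Nl.set ↑ib ((Nl.get ib).bump i)) ↑Ll)
        (fun σ'' => UpsB t σ'' x)]
      simp only [ups_bump_eval hUpsB t l Nl Ll i ib]
    -- E2
    have hE2 : (∑ᶠ σ'' : SB.B,
        (if ∃ o : Odx Lp d, σ'' = SB.node l (freshPD o i ::ₘ ↑Nl) ↑Ll then (1:ℝ) else 0) *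
        UpsB t σ'' x) =
        AfD Nl x * BfD UpsB Ll x * pderivO i (CfD (SB := SB) F t l Nl Ll) x := by
      rw [finsum_exists_indicator (fresh_inj SB l ↑Nl ↑Ll i) (fun σ'' => UpsB t σ'' x)
        ((sC t).finite_toSet.subset hfreshsub)]
      rw [finsum_eq_finset_sum_of_support_subset _ hfreshsub]
      simp only [pderivO_eq_sum hC i, Finset.mul_sum]
      refine Finset.sum_congr rfl fun o _ => ?_
      simp only [ups_fresh_eval hUpsB t l Nl Ll i o]
      ring
    -- E3
    have hE3 : (∑ᶠ σ'' : SB.B, (∑ j : Fin Ll.length, ∑ᶠ σ' : SB.B,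
        raiseB i (Ll.get j).2 σ' *
        (if σ'' = SB.node l ↑Nl ↑(Ll.set ↑j ((Ll.get j).1, σ')) then 1 else 0)) *
        UpsB t σ'' x) =
        ∑ j : Fin Ll.length, AfD Nl x *
          (pderivO i (UpsB (Ll.get j).1.1 (Ll.get j).2) x *
            ∏ j' ∈ Finset.univ.erase j, UpsB (Ll.get j').1.1 (Ll.get j').2 x) *
          CfD (SB := SB) F t l Nl Ll x := by
      have h1 : (fun σ'' : SB.B => (∑ j : Fin Ll.length, ∑ᶠ σ' : SB.B,
          raiseB i (Ll.get j).2 σ' *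
          (if σ'' = SB.node l ↑Nl ↑(Ll.set ↑j ((Ll.get j).1, σ')) then 1 else 0)) *
          UpsB t σ'' x) =
          fun σ'' => ∑ j : Fin Ll.length, (∑ᶠ σ' : SB.B, raiseB i (Ll.get j).2 σ' *
            (if σ'' = SB.node l ↑Nl ↑(Ll.set ↑j ((Ll.get j).1, σ')) then 1 else 0)) *
            UpsB t σ'' x := by
        funext σ''
        rw [Finset.sum_mul]
      have hjfin : ∀ j : Fin Ll.length, (Function.support fun σ'' : SB.B =>
          (∑ᶠ σ' : SB.B, raiseB i (Ll.get j).2 σ' *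
            (if σ'' = SB.node l ↑Nl ↑(Ll.set ↑j ((Ll.get j).1, σ')) then 1 else 0)) *
          UpsB t σ'' x).Finite := by
        intro j
        refine Set.Finite.subset (((IHj j).2.1 i).image
          (fun σ' : SB.B => SB.node l ↑Nl ↑(Ll.set ↑j ((Ll.get j).1, σ')))) ?_
        intro σ'' h
        simp only [Function.mem_support] at h
        have hUx : UpsB t σ'' x ≠ 0 := fun h0 => h (by rw [h0, mul_zero])
        have hS : (∑ᶠ σ' : SB.B, raiseB i (Ll.get j).2 σ' *
            (if σ'' = SB.node l ↑Nl ↑(Ll.set ↑j ((Ll.get j).1, σ')) then 1 else 0)) ≠ 0 :=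
          fun h0 => h (by rw [h0, zero_mul])
        obtain ⟨σ', hσ'⟩ : ∃ σ' : SB.B, raiseB i (Ll.get j).2 σ' *
            (if σ'' = SB.node l ↑Nl ↑(Ll.set ↑j ((Ll.get j).1, σ')) then 1 else 0) ≠ 0 := by
          by_contra hc
          push_neg at hc
          exact hS (finsum_eq_zero_of_forall_eq_zero hc)
        have heq : σ'' = SB.node l ↑Nl ↑(Ll.set ↑j ((Ll.get j).1, σ')) := by
          by_contra hne
          exact hσ' (by rw [if_neg hne, mul_zero])
        have hrr : raiseB i (Ll.get j).2 σ' ≠ 0 := fun h0 => hσ' (by rw [h0, zero_mul])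
        subst heq
        exact ⟨σ', ⟨hrr, (Ll.get j).1.1, replNe j σ' t fun h0 => hUx (by rw [h0]; simp)⟩, rfl⟩
      rw [h1, finsum_sum_comm _ _ (fun j _ => hjfin j)]
      refine Finset.sum_congr rfl fun j _ => ?_
      have hcfin : (Function.support fun σ' : SB.B => raiseB i (Ll.get j).2 σ' *
          UpsB t (SB.node l ↑Nl ↑(Ll.set ↑j ((Ll.get j).1, σ'))) x).Finite := by
        refine Set.Finite.subset ((IHj j).2.1 i) ?_
        intro σ' h
        simp only [Function.mem_support] at h
        have hUx : UpsB t (SB.node l ↑Nl ↑(Ll.set ↑j ((Ll.get j).1, σ'))) x ≠ 0 :=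
          fun h0 => h (by rw [h0, mul_zero])
        exact ⟨fun h0 => h (by rw [h0, zero_mul]), (Ll.get j).1.1,
          replNe j σ' t fun h0 => hUx (by rw [h0]; simp)⟩
      rw [finsum_comp_inj (replace_inj SB l ↑Nl Ll j (Ll.get j)) (raiseB i (Ll.get j).2)
        (fun σ'' => UpsB t σ'' x) hcfin]
      have h2 : (fun σ' : SB.B => raiseB i (Ll.get j).2 σ' *
          UpsB t (SB.node l ↑Nl ↑(Ll.set ↑j ((Ll.get j).1, σ'))) x) =
          fun σ' => (AfD Nl x *
            (∏ j' ∈ Finset.univ.erase j, UpsB (Ll.get j').1.1 (Ll.get j').2 x) *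
            CfD (SB := SB) F t l Nl Ll x) *
            (raiseB i (Ll.get j).2 σ' * UpsB (Ll.get j).1.1 σ' x) := by
        funext σ'
        simp only [ups_replace_eval hUpsB t l Nl Ll j σ']
        ring
      rw [h2, ← mul_finsum _ _]
      have hIH : (∑ᶠ σ' : SB.B, raiseB i (Ll.get j).2 σ' * UpsB (Ll.get j).1.1 σ' x) =
          pderivO i (UpsB (Ll.get j).1.1 (Ll.get j).2) x :=
        congrFun ((IHj j).2.2 i (Ll.get j).1.1) x
      rw [hIH]
      ring
    rw [hE1, hE2, hE3, hRHS]
    ring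
  exact ⟨part1, part2, part3⟩


end SPDERenorm
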